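/- A partition λ of n is the cycle type of the square of some permutation in S_n if and only if for every i, the multiplicity of the even part 2i in λ is even. -/

import Mathlib

open Equiv Equiv.Perm Multiset

variable {α : Type*} [Fintype α] [DecidableEq α]

lemma cycleType_sq_of_isCycle_odd {c : Perm α} (hc : c.IsCycle)
    (hodd : Odd c.support.card) : (c ^ 2).cycleType = {c.support.card} := by
  have horder : orderOf c = c.support.card := hc.orderOf
  have hcop : Nat.Coprime 2 (orderOf c) := by
    refine (Nat.Prime.coprime_iff_not_dvd Nat.prime_two).2 ?_
    rw [horder]
    exact fun h => (Nat.not_even_iff_odd.mpr hodd) (even_iff_two_dvd.mpr h)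
  have hc2 : (c ^ 2).IsCycle := hc.pow_iff.2 hcop
  have hs : (c ^ 2).support = c.support := support_pow_coprime hcop
  rw [hc2.cycleType, hs]

lemma cycleType_sq_of_isCycle_even {c : Perm α} (hc : c.IsCycle) {m : ℕ} (hm : 2 ≤ m)
    (hcard : c.support.card = 2 * m) : (c ^ 2).cycleType = {m, m} := by
  have horder : orderOf c = 2 * m := hc.orderOf.trans hcard
  have hs : (c ^ 2).support = c.support := by
    refine hc.support_pow_eq_iff.2 ?_
    rw [horder]
    exact Nat.not_dvd_of_pos_of_lt (by norm_num) (by omega)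
  have hmem : ∀ a ∈ (c ^ 2).cycleType, a = m := by
    intro a ha
    obtain ⟨d, τ, hmul, hdisj, hd, rfl⟩ := mem_cycleType_iff.1 ha
    obtain ⟨x, hx⟩ := hd.nonempty_support
    have hxc : x ∈ c.support := by
      rw [← hs, hmul, hdisj.support_mul]
      exact Finset.mem_union_left _ hx
    have hxcne : c x ≠ x := mem_support.1 hxc
    -- for all j, d ^ j x = (c ^ 2) ^ j x
    have hpow : ∀ j : ℕ, (d ^ j) x = ((c ^ 2) ^ j) x := by
      intro j
      rw [hmul, hdisj.commute.mul_pow]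
      have hτ : (τ ^ j) x = x := by
        apply pow_apply_eq_self_of_apply_eq_self
        by_contra h
        exact (hdisj x).elim (fun h' => (mem_support.1 hx) h') h
      rw [mul_apply, hτ]
    -- d ^ j = 1 ↔ m ∣ j
    have key : ∀ j : ℕ, d ^ j = 1 ↔ m ∣ j := by
      intro j
      rw [hd.pow_eq_one_iff' (mem_support.1 hx), hpow, ← pow_mul]
      rw [hc.pow_eq_one_iff' hxcne |>.symm, ← orderOf_dvd_iff_pow_eq_one, horder]
      exact Nat.mul_dvd_mul_iff_left (by norm_num : (0:ℕ) < 2)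
    have hord : orderOf d = m := by
      refine Nat.dvd_antisymm ?_ ?_
      · exact orderOf_dvd_of_pow_eq_one ((key m).2 dvd_rfl)
      · exact (key (orderOf d)).1 (pow_orderOf_eq_one d)
    rw [← hd.orderOf, hord]
  have hsum : (c ^ 2).cycleType.sum = 2 * m := by
    rw [sum_cycleType, hs, hcard]
  have hrep := Multiset.eq_replicate_of_mem hmem
  rw [hrep] at hsum ⊢
  rw [Multiset.sum_replicate, smul_eq_mul] at hsum
  have : Multiset.card (c ^ 2).cycleType = 2 := by
    have hm0 : 0 < m := by omega
    exact Nat.eq_of_mul_eq_mul_right hm0 (by omega)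
  rw [this]
  rfl

lemma count_cycleType_sq (σ : Perm α) (k : ℕ) (hk : 2 ≤ k) :
    (σ ^ 2).cycleType.count k =
      (if Odd k then σ.cycleType.count k else 0) + 2 * σ.cycleType.count (2 * k) := by
  induction σ using cycle_induction_on with
  | base_one => simp
  | base_cycles c hc =>
    have hge := hc.two_le_card_support
    rcases Nat.even_or_odd c.support.card with he | ho
    · obtain ⟨m, hm⟩ : ∃ m, c.support.card = 2 * m := even_iff_exists_two_mul.1 he
      rcases Nat.lt_or_ge m 2 with h1 | h2
      · -- m = 1 : c^2 = 1
        have hm1 : m = 1 := by omega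
        have ho2 : orderOf c = 2 := by rw [hc.orderOf, hm, hm1]
        have hone : c ^ 2 = 1 := by rw [← ho2]; exact pow_orderOf_eq_one c
        rw [hone, hc.cycleType, hm, hm1]
        simp only [cycleType_one, Multiset.count_zero, Multiset.count_singleton]
        rcases Nat.even_or_odd k with hke | hko
        · rw [if_neg (Nat.not_odd_iff_even.mpr hke)]
          split_ifs <;> omega
        · rw [if_pos hko]
          have := Nat.odd_iff.1 hko
          split_ifs <;> omega
      · rw [cycleType_sq_of_isCycle_even hc h2 hm, hc.cycleType, hm]
        simp only [Multiset.insert_eq_cons, Multiset.count_cons, Multiset.count_singleton]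
        rcases Nat.even_or_odd k with hke | hko
        · rw [if_neg (Nat.not_odd_iff_even.mpr hke)]
          split_ifs <;> omega
        · rw [if_pos hko]
          have := Nat.odd_iff.1 hko
          split_ifs <;> omega
    · rw [cycleType_sq_of_isCycle_odd hc ho, hc.cycleType]
      simp only [Multiset.count_singleton]
      have hoc := Nat.odd_iff.1 ho
      rcases Nat.even_or_odd k with hke | hko
      · rw [if_neg (Nat.not_odd_iff_even.mpr hke)]
        have := Nat.even_iff.1 hke
        split_ifs <;> omega
      · rw [if_pos hko]
        have := Nat.odd_iff.1 hko
        split_ifs <;> omega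
  | induction_disjoint σ τ hd hσ ihσ ihτ =>
    have hd2 : Disjoint (σ ^ 2) (τ ^ 2) := by
      rw [disjoint_iff_disjoint_support] at hd ⊢
      exact hd.mono (support_pow_le σ 2) (support_pow_le τ 2)
    rw [hd.commute.mul_pow, Perm.Disjoint.cycleType_mul hd2, hd.cycleType_mul, Multiset.count_add,
      Multiset.count_add, Multiset.count_add, ihσ, ihτ]
    split_ifs <;> ring

lemma count_one_eq_of_counts_eq {s t : Multiset ℕ} (hsum : s.sum = t.sum)
    (h : ∀ k, k ≠ 1 → s.count k = t.count k) : s.count 1 = t.count 1 := by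
  have hf : s.filter (fun a => ¬ a = 1) = t.filter (fun a => ¬ a = 1) := by
    refine Multiset.ext.2 fun k => ?_
    rw [Multiset.count_filter, Multiset.count_filter]
    split_ifs with h1
    · rfl
    · exact h k h1
  have hs' : s.count 1 + (s.filter (fun a => ¬ a = 1)).sum = s.sum := by
    conv_rhs => rw [← Multiset.filter_add_not (fun a => a = 1) s]
    rw [Multiset.sum_add, Multiset.filter_eq', Multiset.sum_replicate, smul_eq_mul, mul_one]
  have ht' : t.count 1 + (t.filter (fun a => ¬ a = 1)).sum = t.sum := by
    conv_rhs => rw [← Multiset.filter_add_not (fun a => a = 1) t]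
    rw [Multiset.sum_add, Multiset.filter_eq', Multiset.sum_replicate, smul_eq_mul, mul_one]
  rw [hf] at hs'
  omega

/-- A partition `λ` of `n` is the cycle type of the square of a permutation in
`S_n` if and only if every even part `2i` of `λ` has even multiplicity. -/
theorem partition_is_square_cycleType_iff (n : ℕ) (lam : n.Partition) :
    (∃ σ : Equiv.Perm (Fin n), (σ ^ 2).partition.parts = lam.parts) ↔
    ∀ i : ℕ, Even (lam.parts.count (2 * i)) := by
  constructor
  · rintro ⟨σ, hσ⟩ i
    rw [← hσ]
    rcases Nat.eq_zero_or_pos i with rfl | hi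
    · rw [mul_zero, Multiset.count_eq_zero_of_notMem
        (fun hmem => lt_irrefl 0 ((σ ^ 2).partition.parts_pos hmem))]
      exact Even.zero
    · rw [parts_partition, Multiset.count_add, Multiset.count_replicate,
        if_neg (by omega : ¬ 1 = 2 * i), add_zero,
        count_cycleType_sq σ (2 * i) (by omega),
        if_neg (Nat.not_odd_iff_even.mpr (even_two_mul i)), zero_add]
      exact even_two_mul _
  · intro h
    have hdvd : ∀ a ∈ lam.parts.filter (fun a => Even a),
        2 ∣ (lam.parts.filter (fun a => Even a)).count a := by
      intro a ha
      have hae : Even a := (Multiset.mem_filter.1 ha).2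
      rw [Multiset.count_filter, if_pos hae]
      obtain ⟨i, hi⟩ := hae
      have hai : a = 2 * i := by omega
      rw [hai]
      exact (h i).two_dvd
    obtain ⟨hM, hE⟩ := Multiset.exists_smul_of_dvd_count _ hdvd
    have hmap2 : ∀ j : ℕ, (hM.map (fun b => 2 * b)).count (2 * j) = hM.count j :=
      fun j => Multiset.count_map_eq_count' _ _ (fun x y hxy => by omega) j
    have hfE : ∀ a, (lam.parts.filter (fun a => Even a)).count a = 2 * hM.count a := by
      intro a; rw [hE, Multiset.count_nsmul]
    -- the cycle type of the square root permutation
    have hall : ∀ a ∈ lam.parts.filter (fun a => ¬ Even a ∧ a ≠ 1) + hM.map (fun b => 2 * b),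
        2 ≤ a := by
      intro a ha
      rcases Multiset.mem_add.1 ha with h' | h'
      · have h'' := Multiset.mem_filter.1 h'
        have h1 := lam.parts_pos h''.1
        have h2 := h''.2.2
        omega
      · obtain ⟨b, hb, rfl⟩ := Multiset.mem_map.1 h'
        have hbE : b ∈ lam.parts.filter (fun a => Even a) := by
          rw [hE]
          exact Multiset.mem_nsmul.2 ⟨by norm_num, hb⟩
        have := lam.parts_pos (Multiset.mem_filter.1 hbE).1
        omega
    have hsum' : (lam.parts.filter (fun a => ¬ Even a ∧ a ≠ 1) + hM.map (fun b => 2 * b)).sum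
        ≤ Fintype.card (Fin n) := by
      have hmsum : (hM.map (fun b => 2 * b)).sum = (lam.parts.filter (fun a => Even a)).sum := by
        rw [hE]
        have h1 : (hM.map (fun b => 2 * b)).sum = 2 * hM.sum := by
          rw [show (fun b => 2 * b) = fun b : ℕ => 2 * id b from rfl,
            Multiset.sum_map_mul_left, Multiset.map_id]
        rw [h1, two_nsmul, Multiset.sum_add, two_mul]
      rw [Multiset.sum_add, hmsum, ← Multiset.sum_add]
      have hle : lam.parts.filter (fun a => ¬ Even a ∧ a ≠ 1)
          + lam.parts.filter (fun a => Even a) ≤ lam.parts := by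
        rw [Multiset.le_iff_count]
        intro a
        rw [Multiset.count_add, Multiset.count_filter, Multiset.count_filter]
        split_ifs with h1 h2
        · exact absurd h2 h1.1
        · omega
        · omega
        · omega
      obtain ⟨u, hu⟩ := Multiset.le_iff_exists_add.1 hle
      have h2 := congrArg Multiset.sum hu
      rw [Multiset.sum_add] at h2
      have h3 := lam.parts_sum
      rw [Fintype.card_fin]
      omega
    obtain ⟨σ, hσ⟩ := (Equiv.Perm.exists_with_cycleType_iff (Fin n)).2 ⟨hsum', hall⟩
    refine ⟨σ, ?_⟩
    have hks : ∀ k, k ≠ 1 → ((σ ^ 2).partition.parts).count k = lam.parts.count k := by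
      intro k hk1
      rcases Nat.lt_or_ge k 2 with hklt | hk2
      · have hk0 : k = 0 := by omega
        subst hk0
        rw [Multiset.count_eq_zero_of_notMem
            (fun hmem => lt_irrefl 0 ((σ ^ 2).partition.parts_pos hmem)),
          Multiset.count_eq_zero_of_notMem
            (fun hmem => lt_irrefl 0 (lam.parts_pos hmem))]
      · rw [parts_partition, Multiset.count_add, Multiset.count_replicate, if_neg (fun h' => hk1 h'.symm), add_zero,
          count_cycleType_sq σ k hk2, hσ]
        have hO2k : (lam.parts.filter (fun a => ¬ Even a ∧ a ≠ 1)).count (2 * k) = 0 := by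
          rw [Multiset.count_filter, if_neg (fun hcon => hcon.1 (even_two_mul k))]
        have hM2k : (lam.parts.filter (fun a => ¬ Even a ∧ a ≠ 1)
            + hM.map (fun b => 2 * b)).count (2 * k) = hM.count k := by
          rw [Multiset.count_add, hO2k, hmap2 k, zero_add]
        rcases Nat.even_or_odd k with hke | hko
        · rw [if_neg (Nat.not_odd_iff_even.mpr hke), zero_add, hM2k, ← hfE k,
            Multiset.count_filter, if_pos hke]
        · have hOk : (lam.parts.filter (fun a => ¬ Even a ∧ a ≠ 1)).count k
              = lam.parts.count k := by
            rw [Multiset.count_filter, if_pos ⟨Nat.not_even_iff_odd.mpr hko, hk1⟩]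
          have hmapk : (hM.map (fun b => 2 * b)).count k = 0 := by
            rw [Multiset.count_eq_zero]
            intro hmem
            obtain ⟨b, _, hb⟩ := Multiset.mem_map.1 hmem
            have := Nat.odd_iff.1 hko
            omega
          have hMk0 : hM.count k = 0 := by
            have h' := hfE k
            rw [Multiset.count_filter, if_neg (Nat.not_even_iff_odd.mpr hko)] at h'
            omega
          rw [if_pos hko, Multiset.count_add, hOk, hmapk, add_zero, hM2k, hMk0, mul_zero,
            add_zero]
    have hsums : ((σ ^ 2).partition.parts).sum = lam.parts.sum := by
      rw [(σ ^ 2).partition.parts_sum, lam.parts_sum, Fintype.card_fin]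
    refine Multiset.ext.2 fun k => ?_
    by_cases hk : k = 1
    · subst hk
      exact count_one_eq_of_counts_eq hsums hks
    · exact hks k hk
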